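/- Let B be an r×r Hermitian positive definite matrix with ordered eigenvalues b1 ≥ ⋯ ≥ b_r, let D = diag(d1,…,d_r) with d1 ≥ ⋯ ≥ d_r ≥ 0, and let Q be an r×r unitary matrix. Then tr(B^{−1} Q D Qᴴ) ≥ Σ_{i=1}^r d_i / b_i. -/

import Mathlib

open Matrix Finset
open scoped ComplexOrder

/-- For a doubly stochastic matrix `P` and antivarying `f`, `g`,
the aligned pairing minimizes the bilinear form. -/
lemma ds_key {r : ℕ} (f g : Fin r → ℝ) (hfg : Antivary f g)
    (P : Matrix (Fin r) (Fin r) ℝ) (hP : P ∈ doublyStochastic ℝ (Fin r)) :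
    ∑ i, f i * g i ≤ ∑ i, ∑ j, P i j * (f i * g j) := by
  obtain ⟨w, hw0, hw1, hw⟩ := exists_eq_sum_perm_of_mem_doublyStochastic hP
  have hPij : ∀ i j, P i j = ∑ σ : Equiv.Perm (Fin r), w σ * (σ.permMatrix ℝ) i j := by
    intro i j
    rw [← hw]
    simp [Matrix.sum_apply, Equiv.Perm.permMatrix, PEquiv.toMatrix_apply]
  have hperm : ∀ σ : Equiv.Perm (Fin r),
      (∑ i, ∑ j, (σ.permMatrix ℝ) i j * (f i * g j)) = ∑ i, f i * g (σ i) := by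
    intro σ
    refine Finset.sum_congr rfl fun i _ => ?_
    simp [Equiv.Perm.permMatrix, PEquiv.toMatrix_apply, Equiv.toPEquiv_apply,
      Finset.sum_ite_eq, eq_comm]
  have hswap : ∑ i, ∑ j, P i j * (f i * g j)
      = ∑ σ : Equiv.Perm (Fin r), w σ * ∑ i, f i * g (σ i) := by
    calc ∑ i, ∑ j, P i j * (f i * g j)
        = ∑ i, ∑ j, ∑ σ : Equiv.Perm (Fin r), w σ * (σ.permMatrix ℝ) i j * (f i * g j) := by
          simp only [hPij, Finset.sum_mul]
      _ = ∑ i, ∑ σ : Equiv.Perm (Fin r), ∑ j, w σ * (σ.permMatrix ℝ) i j * (f i * g j) :=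
          Finset.sum_congr rfl fun i _ => Finset.sum_comm
      _ = ∑ σ : Equiv.Perm (Fin r), ∑ i, ∑ j, w σ * (σ.permMatrix ℝ) i j * (f i * g j) :=
          Finset.sum_comm
      _ = ∑ σ : Equiv.Perm (Fin r), w σ * ∑ i, f i * g (σ i) := by
          refine Finset.sum_congr rfl fun σ _ => ?_
          simp only [mul_assoc, ← Finset.mul_sum]
          rw [hperm σ]
  rw [hswap]
  calc ∑ i, f i * g i = ∑ σ : Equiv.Perm (Fin r), w σ * ∑ i, f i * g i := by
        rw [← Finset.sum_mul, hw1, one_mul]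
    _ ≤ ∑ σ : Equiv.Perm (Fin r), w σ * ∑ i, f i * g (σ i) := by
        refine Finset.sum_le_sum fun σ _ => mul_le_mul_of_nonneg_left ?_ (hw0 σ)
        simpa [smul_eq_mul] using hfg.sum_smul_le_sum_smul_comp_perm (σ := σ)

/-- Trace inequality: if `B ≻ 0` has ordered eigenvalues `b₁ ≥ ⋯ ≥ b_r`,
`D = diag(d₁,…,d_r)` with `d₁ ≥ ⋯ ≥ d_r ≥ 0`, and `Q` is unitary, then
`tr(B⁻¹ Q D Qᴴ) ≥ Σᵢ dᵢ/bᵢ`. -/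
theorem trace_inv_mul_unitary_diag_ge {r : ℕ}
    (B : Matrix (Fin r) (Fin r) ℂ) (hB : B.PosDef)
    (b : Fin r → ℝ) (hb_mono : ∀ i j : Fin r, i ≤ j → b j ≤ b i)
    (hb_eig : ∃ σ : Equiv.Perm (Fin r), ∀ i, b i = hB.1.eigenvalues (σ i))
    (d : Fin r → ℝ) (hd_mono : ∀ i j : Fin r, i ≤ j → d j ≤ d i)
    (hd_nonneg : ∀ i, 0 ≤ d i)
    (Q : Matrix (Fin r) (Fin r) ℂ) (hQ : Qᴴ * Q = 1) :
    ∑ i, d i / b i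
      ≤ ((B⁻¹ * (Q * Matrix.diagonal (fun i => (d i : ℂ)) * Qᴴ)).trace).re := by
  obtain ⟨σ, hσ⟩ := hb_eig
  set eig : Fin r → ℝ := hB.1.eigenvalues with heig
  set U : Matrix (Fin r) (Fin r) ℂ := (hB.1.eigenvectorUnitary : Matrix (Fin r) (Fin r) ℂ)
    with hUdef
  have hU1 : Uᴴ * U = 1 := by
    simpa [hUdef, star_eq_conjTranspose] using
      (Matrix.mem_unitaryGroup_iff'.mp hB.1.eigenvectorUnitary.2)
  have hU2 : U * Uᴴ = 1 := by
    simpa [hUdef, star_eq_conjTranspose] using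
      (Matrix.mem_unitaryGroup_iff.mp hB.1.eigenvectorUnitary.2)
  have heigpos : ∀ i, 0 < eig i := fun i => hB.eigenvalues_pos i
  have hBspec : B = U * Matrix.diagonal (fun i => (eig i : ℂ)) * Uᴴ := by
    exact hB.1.spectral_theorem
  have hBinv : B⁻¹ = U * Matrix.diagonal (fun i => ((eig i)⁻¹ : ℂ)) * Uᴴ := by
    apply Matrix.inv_eq_right_inv
    rw [hBspec]
    calc U * Matrix.diagonal (fun i => (eig i : ℂ)) * Uᴴ *
          (U * Matrix.diagonal (fun i => ((eig i)⁻¹ : ℂ)) * Uᴴ)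
        = U * Matrix.diagonal (fun i => (eig i : ℂ)) * (Uᴴ * U) *
          Matrix.diagonal (fun i => ((eig i)⁻¹ : ℂ)) * Uᴴ := by
          simp only [Matrix.mul_assoc]
      _ = U * (Matrix.diagonal (fun i => (eig i : ℂ)) *
          Matrix.diagonal (fun i => ((eig i)⁻¹ : ℂ))) * Uᴴ := by
          rw [hU1]
          simp only [Matrix.mul_one, Matrix.mul_assoc]
      _ = 1 := by
          rw [Matrix.diagonal_mul_diagonal]
          have : (fun i => (eig i : ℂ) * ((eig i)⁻¹ : ℂ)) = fun _ => (1 : ℂ) := by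
            funext i
            rw [mul_inv_cancel₀]
            exact_mod_cast (heigpos i).ne'
          rw [this, Matrix.diagonal_one, Matrix.mul_one, hU2]
  set M : Matrix (Fin r) (Fin r) ℂ := Uᴴ * Q with hMdef
  have hQQ : Q * Qᴴ = 1 := mul_eq_one_comm.mp hQ
  have hM1 : Mᴴ * M = 1 := by
    rw [hMdef, Matrix.conjTranspose_mul, Matrix.conjTranspose_conjTranspose]
    calc Qᴴ * U * (Uᴴ * Q) = Qᴴ * (U * Uᴴ) * Q := by simp only [Matrix.mul_assoc]
      _ = 1 := by rw [hU2, Matrix.mul_one, hQ]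
  have hM2 : M * Mᴴ = 1 := mul_eq_one_comm.mp hM1
  have htr : (B⁻¹ * (Q * Matrix.diagonal (fun i => (d i : ℂ)) * Qᴴ)).trace
      = (Matrix.diagonal (fun i => ((eig i)⁻¹ : ℂ)) *
          (M * (Matrix.diagonal (fun i => (d i : ℂ)) * Mᴴ))).trace := by
    rw [hBinv]
    simp only [Matrix.mul_assoc]
    rw [Matrix.trace_mul_comm]
    simp only [Matrix.mul_assoc]
    rw [hMdef, Matrix.conjTranspose_mul, Matrix.conjTranspose_conjTranspose]
    simp only [Matrix.mul_assoc]
  have hentry : (Matrix.diagonal (fun i => ((eig i)⁻¹ : ℂ)) *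
          (M * (Matrix.diagonal (fun i => (d i : ℂ)) * Mᴴ))).trace
      = ((∑ i, ∑ j, (eig i)⁻¹ * (Complex.normSq (M i j) * d j) : ℝ) : ℂ) := by
    rw [Matrix.trace]
    push_cast
    refine Finset.sum_congr rfl fun i _ => ?_
    rw [Matrix.diag_apply, Matrix.diagonal_mul, Matrix.mul_apply, Finset.mul_sum]
    refine Finset.sum_congr rfl fun j _ => ?_
    rw [Matrix.diagonal_mul, Matrix.conjTranspose_apply, Complex.star_def,
      show M i j * ((d j : ℂ) * (starRingEnd ℂ) (M i j))
        = (d j : ℂ) * (M i j * (starRingEnd ℂ) (M i j)) by ring,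
      Complex.mul_conj]
    ring
  rw [htr, hentry, Complex.ofReal_re]
  -- row and column sums of |M|²
  have hsumrow : ∀ j, ∑ i, Complex.normSq (M i j) = 1 := by
    intro j
    have h1 := congrFun (congrFun hM1 j) j
    simp only [Matrix.mul_apply, Matrix.conjTranspose_apply, Matrix.one_apply_eq] at h1
    have h2 : ∑ i, (Complex.normSq (M i j) : ℂ) = 1 := by
      rw [← h1]
      refine Finset.sum_congr rfl fun i _ => ?_
      rw [mul_comm, Complex.star_def, Complex.mul_conj]
    exact_mod_cast h2
  have hsumcol : ∀ i, ∑ j, Complex.normSq (M i j) = 1 := by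
    intro i
    have h1 := congrFun (congrFun hM2 i) i
    simp only [Matrix.mul_apply, Matrix.conjTranspose_apply, Matrix.one_apply_eq] at h1
    have h2 : ∑ j, (Complex.normSq (M i j) : ℂ) = 1 := by
      rw [← h1]
      refine Finset.sum_congr rfl fun j _ => ?_
      rw [Complex.star_def, Complex.mul_conj]
    exact_mod_cast h2
  have hb_pos : ∀ i, 0 < b i := fun i => by rw [hσ i]; exact heigpos _
  have hAnti : Antivary d (fun i => (b i)⁻¹) := by
    intro i j hij
    dsimp only at hij
    have hlt : b j < b i := by rwa [inv_lt_inv₀ (hb_pos i) (hb_pos j)] at hij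
    have hij' : i ≤ j := by
      by_contra h
      push_neg at h
      exact absurd (hb_mono j i h.le) (not_le.mpr hlt)
    exact hd_mono i j hij'
  set P : Matrix (Fin r) (Fin r) ℝ := fun j k => Complex.normSq (M (σ k) j) with hPdef
  have hP : P ∈ doublyStochastic ℝ (Fin r) := by
    rw [mem_doublyStochastic_iff_sum]
    refine ⟨fun i j => Complex.normSq_nonneg _, fun j => ?_, fun k => ?_⟩
    · calc ∑ k, P j k = ∑ k, Complex.normSq (M (σ k) j) := rfl
        _ = ∑ i, Complex.normSq (M i j) := Equiv.sum_comp σ (fun i => Complex.normSq (M i j))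
        _ = 1 := hsumrow j
    · exact hsumcol (σ k)
  have hkey := ds_key d (fun i => (b i)⁻¹) hAnti P hP
  calc ∑ i, d i / b i = ∑ i, d i * (b i)⁻¹ := by simp [div_eq_mul_inv]
    _ ≤ ∑ j, ∑ k, P j k * (d j * (b k)⁻¹) := hkey
    _ = ∑ i, ∑ j, (eig i)⁻¹ * (Complex.normSq (M i j) * d j) := by
        rw [Finset.sum_comm]
        rw [← Equiv.sum_comp σ (fun i => ∑ j, (eig i)⁻¹ * (Complex.normSq (M i j) * d j))]
        refine Finset.sum_congr rfl fun k _ => Finset.sum_congr rfl fun j _ => ?_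
        show Complex.normSq (M (σ k) j) * (d j * (b k)⁻¹)
          = (eig (σ k))⁻¹ * (Complex.normSq (M (σ k) j) * d j)
        rw [hσ k]
        ring
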